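/- There exists a probability space and integrable random variables γ̃, δ̃ with E[γ̃] ≠ 0, E[δ̃] ≠ 0 such that Cov(γ̃, δ̃) = 0 while γ̃ takes both strictly positive and strictly negative values with positive probability; and conversely there exist γ̃', δ̃' with γ̃' ≥ 0 a.s., δ̃' ≥ 0 a.s., E[γ̃'] > 0, E[δ̃'] > 0, and Cov(γ̃', δ̃') ≠ 0. -/
import Mathlib


open MeasureTheory
open scoped ENNReal

noncomputable def myμ : Measure Bool :=
  (2 : ℝ≥0∞)⁻¹ • (Measure.dirac true + Measure.dirac false)

instance : IsProbabilityMeasure myμ := by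
  constructor
  simp [myμ]
  rw [ENNReal.inv_two_add_inv_two]

lemma myμ_integral (f : Bool → ℝ) :
    ∫ ω, f ω ∂myμ = (f true + f false) / 2 := by
  rw [myμ, integral_smul_measure, integral_add_measure]
  · simp [ENNReal.toReal_inv]
    ring
  · exact Integrable.of_finite
  · exact Integrable.of_finite

lemma myμ_integrable (f : Bool → ℝ) : Integrable f myμ := by
  have : Measurable f := measurable_of_countable f
  exact Integrable.of_finite

/-- Cui–Tchetgen Tchetgen's zero-covariance assumption and Han's constant-sign
assumption do not imply each other. -/
theorem stmt_12 :
    (∃ (Ω : Type) (_ : MeasurableSpace Ω) (μ : Measure Ω) (_ : IsProbabilityMeasure μ)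
      (γt δt : Ω → ℝ),
      Integrable γt μ ∧ Integrable δt μ ∧ Integrable (fun ω => γt ω * δt ω) μ ∧
      (∫ ω, γt ω ∂μ) ≠ 0 ∧ (∫ ω, δt ω ∂μ) ≠ 0 ∧
      (∫ ω, γt ω * δt ω ∂μ) - (∫ ω, γt ω ∂μ) * (∫ ω, δt ω ∂μ) = 0 ∧
      0 < μ {ω | 0 < γt ω} ∧ 0 < μ {ω | γt ω < 0}) ∧
    (∃ (Ω : Type) (_ : MeasurableSpace Ω) (μ : Measure Ω) (_ : IsProbabilityMeasure μ)
      (γt' δt' : Ω → ℝ),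
      Integrable γt' μ ∧ Integrable δt' μ ∧ Integrable (fun ω => γt' ω * δt' ω) μ ∧
      (∀ᵐ ω ∂μ, 0 ≤ γt' ω) ∧ (∀ᵐ ω ∂μ, 0 ≤ δt' ω) ∧
      0 < (∫ ω, γt' ω ∂μ) ∧ 0 < (∫ ω, δt' ω ∂μ) ∧
      (∫ ω, γt' ω * δt' ω ∂μ) - (∫ ω, γt' ω ∂μ) * (∫ ω, δt' ω ∂μ) ≠ 0) := by
  constructor
  · refine ⟨Bool, inferInstance, myμ, inferInstance,
      (fun b => if b then 3 else -1), (fun _ => 1),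
      myμ_integrable _, myμ_integrable _, myμ_integrable _, ?_, ?_, ?_, ?_, ?_⟩
    · rw [myμ_integral]; norm_num
    · rw [myμ_integral]; norm_num
    · simp only [myμ_integral]; norm_num
    · have : {ω : Bool | 0 < (fun b => if b then (3:ℝ) else -1) ω} = {true} := by
        ext b; cases b <;> simp
      rw [this, myμ]
      simp [Measure.dirac_apply]
    · have : {ω : Bool | (fun b => if b then (3:ℝ) else -1) ω < 0} = {false} := by
        ext b; cases b <;> simp
      rw [this, myμ]
      simp [Measure.dirac_apply]
  · refine ⟨Bool, inferInstance, myμ, inferInstance,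
      (fun b => if b then 1 else 0), (fun b => if b then 1 else 0),
      myμ_integrable _, myμ_integrable _, myμ_integrable _, ?_, ?_, ?_, ?_, ?_⟩
    · filter_upwards with b; cases b <;> norm_num
    · filter_upwards with b; cases b <;> norm_num
    · rw [myμ_integral]; norm_num
    · rw [myμ_integral]; norm_num
    · simp only [myμ_integral]; norm_num
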